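/- There exists an absolute constant C₀ > 0 with the following property. Let A, B, C ∈ ℝ² and c > 0 be such that min{‖A−B‖, ‖A−C‖, ‖B−C‖, 2} ≥ 2c, and let a > 0 satisfy a < c²/20. Define W := {(x,b) ∈ ℝ² × [1/2, 2] : b−a ≤ ‖x−A‖ ≤ b+a, b−a ≤ ‖x−B‖ ≤ b+a, and b−a ≤ ‖x−C‖ ≤ b+a}. Then the diameter of W (as a subset of ℝ³ with the Euclidean metric) is at most C₀ · a/c². -/

import Mathlib

open scoped ENNReal
open MeasureTheory Metric Set

/-- Projection of a point of `ℝ³` to its first two coordinates, as a point of `ℝ²`. -/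
noncomputable def proj2 (z : EuclideanSpace ℝ (Fin 3)) : EuclideanSpace ℝ (Fin 2) :=
  WithLp.toLp 2 (fun i : Fin 2 => z i.castSucc)


noncomputable def N2 (x1 x2 : ℝ) : ℝ := Real.sqrt (x1^2 + x2^2)

lemma N2_nonneg (x1 x2 : ℝ) : 0 ≤ N2 x1 x2 := Real.sqrt_nonneg _

lemma N2_sq (x1 x2 : ℝ) : (N2 x1 x2)^2 = x1^2 + x2^2 :=
  Real.sq_sqrt (by positivity)

lemma le_N2 (x1 x2 t : ℝ) (ht : 0 ≤ t) (h : t^2 ≤ x1^2 + x2^2) : t ≤ N2 x1 x2 := by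
  have := Real.sqrt_le_sqrt h
  rwa [Real.sqrt_sq ht] at this

lemma N2_le (x1 x2 t : ℝ) (ht : 0 ≤ t) (h : x1^2 + x2^2 ≤ t^2) : N2 x1 x2 ≤ t := by
  have := Real.sqrt_le_sqrt h
  rwa [Real.sqrt_sq ht] at this

lemma N2_cauchy (x1 x2 y1 y2 : ℝ) : x1*y1 + x2*y2 ≤ N2 x1 x2 * N2 y1 y2 := by
  have h : (x1*y1 + x2*y2)^2 ≤ (N2 x1 x2 * N2 y1 y2)^2 := by
    have h1 := N2_sq x1 x2
    have h2 := N2_sq y1 y2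
    nlinarith [sq_nonneg (x1*y2 - x2*y1)]
  have hn : 0 ≤ N2 x1 x2 * N2 y1 y2 := mul_nonneg (N2_nonneg _ _) (N2_nonneg _ _)
  nlinarith [abs_nonneg (x1*y1 + x2*y2), le_abs_self (x1*y1 + x2*y2), sq_abs (x1*y1+x2*y2)]

lemma N2_det_le (x1 x2 y1 y2 : ℝ) : |x1*y2 - x2*y1| ≤ N2 x1 x2 * N2 y1 y2 := by
  have h1 := N2_cauchy x1 x2 y2 (-y1)
  have h2 := N2_cauchy x1 x2 (-y2) y1
  have e : N2 y2 (-y1) = N2 y1 y2 := by unfold N2; ring_nf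
  have e2 : N2 (-y2) y1 = N2 y1 y2 := by unfold N2; ring_nf
  rw [e] at h1; rw [e2] at h2
  rw [abs_le]; constructor <;> nlinarith

lemma N2_add_le (x1 x2 y1 y2 : ℝ) :
    N2 (x1+y1) (x2+y2) ≤ N2 x1 x2 + N2 y1 y2 := by
  apply N2_le
  · exact add_nonneg (N2_nonneg _ _) (N2_nonneg _ _)
  · have h1 := N2_sq x1 x2
    have h2 := N2_sq y1 y2
    have h3 := N2_cauchy x1 x2 y1 y2
    nlinarith

lemma N2_neg (x1 x2 : ℝ) : N2 (-x1) (-x2) = N2 x1 x2 := by unfold N2; ring_nf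

lemma N2_comp1 (x1 x2 : ℝ) : |x1| ≤ N2 x1 x2 := by
  apply le_N2 _ _ _ (abs_nonneg _); rw [sq_abs]; nlinarith [sq_nonneg x2]

lemma N2_comp2 (x1 x2 : ℝ) : |x2| ≤ N2 x1 x2 := by
  apply le_N2 _ _ _ (abs_nonneg _); rw [sq_abs]; nlinarith [sq_nonneg x1]

lemma N2_le_abs_add (x1 x2 : ℝ) : N2 x1 x2 ≤ |x1| + |x2| := by
  apply N2_le _ _ _ (by positivity)
  have := abs_nonneg x1; have := abs_nonneg x2
  nlinarith [sq_abs x1, sq_abs x2, mul_nonneg (abs_nonneg x1) (abs_nonneg x2)]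

lemma N2_abs_eq (t : ℝ) (x1 x2 : ℝ) (h : x1^2 + x2^2 = t^2) : N2 x1 x2 = |t| := by
  unfold N2; rw [h, Real.sqrt_sq_eq_abs]


lemma N2_sub_comm (x1 x2 y1 y2 : ℝ) : N2 (x1-y1) (x2-y2) = N2 (y1-x1) (y2-x2) := by
  rw [show y1-x1 = -(x1-y1) by ring, show y2-x2 = -(x2-y2) by ring, N2_neg]

lemma N2_sub_le' (p1 p2 q1 q2 u1 u2 v1 v2 : ℝ) :
    N2 ((p1-q1)-(u1-v1)) ((p2-q2)-(u2-v2)) ≤ N2 (p1-u1) (p2-u2) + N2 (q1-v1) (q2-v2) := by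
  have e1 : (p1-q1)-(u1-v1) = (p1-u1) + (-(q1-v1)) := by ring
  have e2 : (p2-q2)-(u2-v2) = (p2-u2) + (-(q2-v2)) := by ring
  rw [e1, e2]
  refine le_trans (N2_add_le _ _ _ _) ?_
  rw [N2_neg]

lemma chord_lower (p1 p2 q1 q2 u1 u2 v1 v2 : ℝ) :
    N2 (p1-q1) (p2-q2) - N2 (p1-u1) (p2-u2) - N2 (q1-v1) (q2-v2) ≤ N2 (u1-v1) (u2-v2) := by
  have h := N2_sub_le' p1 p2 q1 q2 u1 u2 v1 v2
  have h2 : N2 (p1-q1) (p2-q2) ≤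
      N2 (u1-v1) (u2-v2) + N2 ((p1-q1)-(u1-v1)) ((p2-q2)-(u2-v2)) := by
    have e : N2 (p1-q1) (p2-q2)
        = N2 ((u1-v1) + ((p1-q1)-(u1-v1))) ((u2-v2) + ((p2-q2)-(u2-v2))) := by
      congr 1 <;> ring
    rw [e]; exact N2_add_le _ _ _ _
  linarith

lemma chord_upper (p1 p2 q1 q2 u1 u2 v1 v2 : ℝ) :
    N2 (u1-v1) (u2-v2) ≤ N2 (p1-q1) (p2-q2) + N2 (p1-u1) (p2-u2) + N2 (q1-v1) (q2-v2) := by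
  have h := N2_sub_le' u1 u2 v1 v2 p1 p2 q1 q2
  have h2 : N2 (u1-v1) (u2-v2) ≤
      N2 (p1-q1) (p2-q2) + N2 ((u1-v1)-(p1-q1)) ((u2-v2)-(p2-q2)) := by
    have e : N2 (u1-v1) (u2-v2)
        = N2 ((p1-q1) + ((u1-v1)-(p1-q1))) ((p2-q2) + ((u2-v2)-(p2-q2))) := by
      congr 1 <;> ring
    rw [e]; exact N2_add_le _ _ _ _
  have e3 : N2 (u1-p1) (u2-p2) = N2 (p1-u1) (p2-u2) := N2_sub_comm _ _ _ _
  have e4 : N2 (v1-q1) (v2-q2) = N2 (q1-v1) (q2-v2) := N2_sub_comm _ _ _ _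
  linarith

lemma proj_circle (b r P1 P2 : ℝ) (hr0 : 0 < r) (hr : r^2 = P1^2 + P2^2) :
    ((b/r)*P1)^2 + ((b/r)*P2)^2 = b^2 ∧
    (P1 - (b/r)*P1)^2 + (P2 - (b/r)*P2)^2 = (r - b)^2 := by
  have hrne : r ≠ 0 := ne_of_gt hr0
  constructor
  · field_simp
    linear_combination (-1)*b^2 * hr
  · field_simp
    linear_combination (-1)*(r-b)^2 * hr
lemma circle_det_identity (u1 u2 v1 v2 w1 w2 ρ : ℝ)
    (h0 : u1^2 + u2^2 = ρ) (h1 : v1^2 + v2^2 = ρ) (h2 : w1^2 + w2^2 = ρ) :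
    4*ρ*((v1-u1)*(w2-u2) - (v2-u2)*(w1-u1))^2 =
      ((u1-v1)^2+(u2-v2)^2) * ((v1-w1)^2+(v2-w2)^2) * ((u1-w1)^2+(u2-w2)^2) := by
  subst h0
  linear_combination ((-1)*w2^4 + (-2)*w1^2*w2^2 + (-1)*w1^4 + 2*v2*w2^3 + 2*v2*w1^2*w2 + (-1)*v2^2*w2^2 + (-1)*v2^2*w1^2 + 2*v1*w1*w2^2 + 2*v1*w1^3 + (-1)*v1^2*w2^2 + (-1)*v1^2*w1^2 + (-2)*u2*w2^3 + (-2)*u2*w1^2*w2 + (-2)*u2*v2*w2^2 + 2*u2*v2*w1^2 + 2*u2*v2^2*w2 + (-4)*u2*v1*w1*w2 + 2*u2*v1^2*w2 + 5*u2^2*w2^2 + 1*u2^2*w1^2 + (-2)*u2^2*v2*w2 + (-1)*u2^2*v2^2 + 2*u2^2*v1*w1 + (-1)*u2^2*v1^2 + 2*u2^3*v2 + (-2)*u2^4 + 2*u1*w1*w2^2 + 2*u1*w1^3 + (-4)*u1*v2*w1*w2 + 2*u1*v2^2*w1 + 2*u1*v1*w2^2 + (-2)*u1*v1*w1^2 +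 2*u1*v1^2*w1 + 8*u1*u2*w1*w2 + (-4)*u1*u2*v2*w1 + (-4)*u1*u2*v1*w2 + (-4)*u1*u2^2*w1 + 2*u1*u2^2*v1 + (-3)*u1^2*w2^2 + 1*u1^2*w1^2 + 2*u1^2*v2*w2 + (-1)*u1^2*v2^2 + (-2)*u1^2*v1*w1 + (-1)*u1^2*v1^2 + 2*u1^2*u2*v2 + (-4)*u1^3*w1 + 2*u1^3*v1 + 2*u1^4) * h1 + (2*u2*v2*w2^2 + 2*u2*v2*w1^2 + (-4)*u2*v1*v2*w1 + 4*u2*v1^2*w2 + (-2)*u2^2*w2^2 + (-2)*u2^2*w1^2 + 4*u2^2*v1*w1 + (-4)*u2^2*v1^2 + (-2)*u2^3*v2 + 2*u2^4 + 2*u1*v1*w2^2 + 2*u1*v1*w1^2 + (-4)*u1*v1*v2*w2 + (-4)*u1*v1^2*w1 + (-4)*u1*u2*v2*w1 + (-4)*u1*u2*v1*w2 + 8*u1*u2*v1*v2 + 4*u1*u2^2*w1 + (-2)*u1*u2^2*v1 + (-2)*u1^2*w2^2 + (-2)*u1^2*w1^2 + 4*u1^2*v2*w2 + 4*u1^2*v1^2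 + (-2)*u1^2*u2*v2 + 4*u1^3*w1 + (-2)*u1^3*v1 + (-2)*u1^4) * h2

lemma le_of_sq_le_sq' {s t : ℝ} (h : s^2 ≤ t^2) (hs : 0 ≤ s) (ht : 0 ≤ t) : s ≤ t := by
  nlinarith

lemma det_combine (c LAB LAC dv de a : ℝ)
    (hdetv : (19/20)^3*(2*c)*(LAB*LAC)/4 ≤ |dv|)
    (habs : |dv| - |de| ≤ |de - dv|)
    (hpert : |de - dv| ≤ 2*a*LAC + (LAB+2*a)*(2*a))
    (k1 : 2*a*LAC ≤ 1/20*(c*(LAB*LAC)))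
    (k2 : 2*a*LAB ≤ 1/20*(c*(LAB*LAC)))
    (k3 : 4*a^2 ≤ 1/100*(c*(LAB*LAC))) :
    3/10*c*(LAB*LAC) ≤ |de| := by
  have hdetv' : 6859/16000*(c*(LAB*LAC)) ≤ |dv| := by nlinarith [hdetv]
  nlinarith [hpert, hdetv', habs, k1, k2, k3]

set_option maxHeartbeats 2000000 in
lemma core_bound (a c b b' x1 x2 y1 y2 A1 A2 B1 B2 C1 C2 : ℝ)
    (hc0 : 0 < c) (hc1 : c ≤ 1) (ha0 : 0 < a) (ha : a ≤ c^2/20)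
    (hb1 : 1/2 ≤ b) (hb2 : b ≤ 2) (hb1' : 1/2 ≤ b') (hb2' : b' ≤ 2)
    (hAB : 2*c ≤ N2 (A1-B1) (A2-B2))
    (hAC : 2*c ≤ N2 (A1-C1) (A2-C2))
    (hBC : 2*c ≤ N2 (B1-C1) (B2-C2))
    (hxA1 : b - a ≤ N2 (x1-A1) (x2-A2)) (hxA2 : N2 (x1-A1) (x2-A2) ≤ b + a)
    (hxB1 : b - a ≤ N2 (x1-B1) (x2-B2)) (hxB2 : N2 (x1-B1) (x2-B2) ≤ b + a)
    (hxC1 : b - a ≤ N2 (x1-C1) (x2-C2)) (hxC2 : N2 (x1-C1) (x2-C2) ≤ b + a)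
    (hyA1 : b' - a ≤ N2 (y1-A1) (y2-A2)) (hyA2 : N2 (y1-A1) (y2-A2) ≤ b' + a)
    (hyB1 : b' - a ≤ N2 (y1-B1) (y2-B2)) (hyB2 : N2 (y1-B1) (y2-B2) ≤ b' + a)
    (hyC1 : b' - a ≤ N2 (y1-C1) (y2-C2)) (hyC2 : N2 (y1-C1) (y2-C2) ≤ b' + a) :
    |x1-y1| ≤ 27*(a/c^2) ∧ |x2-y2| ≤ 27*(a/c^2) := by
  -- basic numeric facts
  have hc2 : (0:ℝ) < c^2 := by positivity
  have hcsq : c^2 ≤ c := by nlinarith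
  have hcsq1 : c^2 ≤ 1 := by nlinarith
  have ha120 : a ≤ 1/20 := by linarith
  have h2a : 2*a ≤ c^2/10 := by linarith
  have h2ac : 2*a ≤ c/10 := by linarith
  -- norms and their squares
  set LAB := N2 (A1-B1) (A2-B2) with hLABdef
  set LAC := N2 (A1-C1) (A2-C2) with hLACdef
  set LBC := N2 (B1-C1) (B2-C2) with hLBCdef
  have hLAB0 : 0 < LAB := lt_of_lt_of_le (by positivity) hAB
  have hLAC0 : 0 < LAC := lt_of_lt_of_le (by positivity) hAC
  have hLBC0 : 0 < LBC := lt_of_lt_of_le (by positivity) hBC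
  have hLABsq : LAB^2 = (A1-B1)^2 + (A2-B2)^2 := N2_sq _ _
  have hLACsq : LAC^2 = (A1-C1)^2 + (A2-C2)^2 := N2_sq _ _
  have hLBCsq : LBC^2 = (B1-C1)^2 + (B2-C2)^2 := N2_sq _ _
  set rA := N2 (x1-A1) (x2-A2) with hrAdef
  set rB := N2 (x1-B1) (x2-B2) with hrBdef
  set rC := N2 (x1-C1) (x2-C2) with hrCdef
  set sA := N2 (y1-A1) (y2-A2) with hsAdef
  set sB := N2 (y1-B1) (y2-B2) with hsBdef
  set sC := N2 (y1-C1) (y2-C2) with hsCdef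
  have hrA0 : 0 < rA := lt_of_lt_of_le (by linarith) hxA1
  have hrB0 : 0 < rB := lt_of_lt_of_le (by linarith) hxB1
  have hrC0 : 0 < rC := lt_of_lt_of_le (by linarith) hxC1
  have hrAsq : rA^2 = (x1-A1)^2 + (x2-A2)^2 := N2_sq _ _
  have hrBsq : rB^2 = (x1-B1)^2 + (x2-B2)^2 := N2_sq _ _
  have hrCsq : rC^2 = (x1-C1)^2 + (x2-C2)^2 := N2_sq _ _
  have hsAsq : sA^2 = (y1-A1)^2 + (y2-A2)^2 := N2_sq _ _
  have hsBsq : sB^2 = (y1-B1)^2 + (y2-B2)^2 := N2_sq _ _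
  have hsCsq : sC^2 = (y1-C1)^2 + (y2-C2)^2 := N2_sq _ _
  -- squared annulus bounds
  have hba0 : (0:ℝ) ≤ b - a := by linarith
  have hrA2u : rA^2 ≤ (b+a)^2 := pow_le_pow_left₀ hrA0.le hxA2 2
  have hrB2u : rB^2 ≤ (b+a)^2 := pow_le_pow_left₀ hrB0.le hxB2 2
  have hrC2u : rC^2 ≤ (b+a)^2 := pow_le_pow_left₀ hrC0.le hxC2 2
  have hrA2l : (b-a)^2 ≤ rA^2 := pow_le_pow_left₀ hba0 hxA1 2
  have hrB2l : (b-a)^2 ≤ rB^2 := pow_le_pow_left₀ hba0 hxB1 2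
  have hrC2l : (b-a)^2 ≤ rC^2 := pow_le_pow_left₀ hba0 hxC1 2
  have hsA0 : 0 < sA := lt_of_lt_of_le (by linarith) hyA1
  have hsB0 : 0 < sB := lt_of_lt_of_le (by linarith) hyB1
  have hsC0 : 0 < sC := lt_of_lt_of_le (by linarith) hyC1
  have hba0' : (0:ℝ) ≤ b' - a := by linarith
  have hsA2u : sA^2 ≤ (b'+a)^2 := pow_le_pow_left₀ hsA0.le hyA2 2
  have hsB2u : sB^2 ≤ (b'+a)^2 := pow_le_pow_left₀ hsB0.le hyB2 2
  have hsC2u : sC^2 ≤ (b'+a)^2 := pow_le_pow_left₀ hsC0.le hyC2 2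
  have hsA2l : (b'-a)^2 ≤ sA^2 := pow_le_pow_left₀ hba0' hyA1 2
  have hsB2l : (b'-a)^2 ≤ sB^2 := pow_le_pow_left₀ hba0' hyB1 2
  have hsC2l : (b'-a)^2 ≤ sC^2 := pow_le_pow_left₀ hba0' hyC1 2
  have h4ab : 4*a*b ≤ 8*a := by
    have h := mul_le_mul_of_nonneg_left hb2 (by linarith : (0:ℝ) ≤ 4*a)
    linarith
  have h4ab' : 4*a*b' ≤ 8*a := by
    have h := mul_le_mul_of_nonneg_left hb2' (by linarith : (0:ℝ) ≤ 4*a)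
    linarith
  have hid : (b+a)^2 - (b-a)^2 = 4*a*b := by ring
  have hid' : (b'+a)^2 - (b'-a)^2 = 4*a*b' := by ring
  -- Step 1 : inner product bounds
  have hip1 : |(x1-y1)*(B1-A1) + (x2-y2)*(B2-A2)| ≤ 8*a := by
    have e' : 2*((x1-y1)*(B1-A1) + (x2-y2)*(B2-A2)) =
        (rA^2 - rB^2) - (sA^2 - sB^2) := by
      rw [hrAsq, hrBsq, hsAsq, hsBsq]; ring
    rw [abs_le]; constructor <;> linarith
  have hip2 : |(x1-y1)*(C1-A1) + (x2-y2)*(C2-A2)| ≤ 8*a := by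
    have e' : 2*((x1-y1)*(C1-A1) + (x2-y2)*(C2-A2)) =
        (rA^2 - rC^2) - (sA^2 - sC^2) := by
      rw [hrAsq, hrCsq, hsAsq, hsCsq]; ring
    rw [abs_le]; constructor <;> linarith
    -- Step 2 : projections onto the circle of radius b around x
  have hABsymm : N2 (B1-A1) (B2-A2) = LAB := by
    rw [hLABdef]; exact N2_sub_comm B1 B2 A1 A2
  have hCAsymm : N2 (C1-A1) (C2-A2) = LAC := by
    rw [hLACdef]; exact N2_sub_comm C1 C2 A1 A2
  have hrA' : rA^2 = (A1-x1)^2 + (A2-x2)^2 := by rw [hrAsq]; ring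
  have hrB' : rB^2 = (B1-x1)^2 + (B2-x2)^2 := by rw [hrBsq]; ring
  have hrC' : rC^2 = (C1-x1)^2 + (C2-x2)^2 := by rw [hrCsq]; ring
  obtain ⟨huc, hud⟩ := proj_circle b rA (A1-x1) (A2-x2) hrA0 hrA'
  obtain ⟨hvc, hvd⟩ := proj_circle b rB (B1-x1) (B2-x2) hrB0 hrB'
  obtain ⟨hwc, hwd⟩ := proj_circle b rC (C1-x1) (C2-x2) hrC0 hrC'
  set u1 := (b/rA)*(A1-x1) with hu1def
  set u2 := (b/rA)*(A2-x2) with hu2def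
  set v1 := (b/rB)*(B1-x1) with hv1def
  set v2 := (b/rB)*(B2-x2) with hv2def
  set w1 := (b/rC)*(C1-x1) with hw1def
  set w2 := (b/rC)*(C2-x2) with hw2def
  have hNuA : N2 ((A1-x1) - u1) ((A2-x2) - u2) = |rA - b| := N2_abs_eq _ _ _ hud
  have hNvB : N2 ((B1-x1) - v1) ((B2-x2) - v2) = |rB - b| := N2_abs_eq _ _ _ hvd
  have hNwC : N2 ((C1-x1) - w1) ((C2-x2) - w2) = |rC - b| := N2_abs_eq _ _ _ hwd
  have habsA : |rA - b| ≤ a := abs_le.mpr ⟨by linarith, by linarith⟩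
  have habsB : |rB - b| ≤ a := abs_le.mpr ⟨by linarith, by linarith⟩
  have habsC : |rC - b| ≤ a := abs_le.mpr ⟨by linarith, by linarith⟩
  -- Step 3 : chord lower bounds
  have h2aLAB : 2*a ≤ LAB/20 := by linarith
  have h2aLAC : 2*a ≤ LAC/20 := by linarith
  have h2aLBC : 2*a ≤ LBC/20 := by linarith
  have hm1 : 19/20*LAB ≤ N2 (u1-v1) (u2-v2) := by
    have h := chord_lower (A1-x1) (A2-x2) (B1-x1) (B2-x2) u1 u2 v1 v2
    have e : N2 ((A1-x1)-(B1-x1)) ((A2-x2)-(B2-x2)) = LAB := by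
      rw [hLABdef]; congr 1 <;> ring
    rw [e, hNuA, hNvB] at h
    linarith
  have hm2 : 19/20*LBC ≤ N2 (v1-w1) (v2-w2) := by
    have h := chord_lower (B1-x1) (B2-x2) (C1-x1) (C2-x2) v1 v2 w1 w2
    have e : N2 ((B1-x1)-(C1-x1)) ((B2-x2)-(C2-x2)) = LBC := by
      rw [hLBCdef]; congr 1 <;> ring
    rw [e, hNvB, hNwC] at h
    linarith
  have hm3 : 19/20*LAC ≤ N2 (u1-w1) (u2-w2) := by
    have h := chord_lower (A1-x1) (A2-x2) (C1-x1) (C2-x2) u1 u2 w1 w2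
    have e : N2 ((A1-x1)-(C1-x1)) ((A2-x2)-(C2-x2)) = LAC := by
      rw [hLACdef]; congr 1 <;> ring
    rw [e, hNuA, hNwC] at h
    linarith
  have hm1sq : (19/20*LAB)^2 ≤ (u1-v1)^2+(u2-v2)^2 := by
    rw [← N2_sq (u1-v1) (u2-v2)]
    exact pow_le_pow_left₀ (by positivity) hm1 2
  have hm2sq : (19/20*LBC)^2 ≤ (v1-w1)^2+(v2-w2)^2 := by
    rw [← N2_sq (v1-w1) (v2-w2)]
    exact pow_le_pow_left₀ (by positivity) hm2 2
  have hm3sq : (19/20*LAC)^2 ≤ (u1-w1)^2+(u2-w2)^2 := by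
    rw [← N2_sq (u1-w1) (u2-w2)]
    exact pow_le_pow_left₀ (by positivity) hm3 2
  -- Step 4 : lower bound for the determinant of the projected points
  set detv := (v1-u1)*(w2-u2) - (v2-u2)*(w1-u1) with hdetvdef
  have hiden := circle_det_identity u1 u2 v1 v2 w1 w2 (b^2) huc hvc hwc
  have hprod : ((19/20*LAB) * (19/20*LBC) * (19/20*LAC))^2 ≤ (2*b*|detv|)^2 := by
    have e1 : (2*b*|detv|)^2 = 4*(b^2)*detv^2 := by
      rw [mul_pow, mul_pow, sq_abs]; ring
    rw [e1, hiden]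
    have h12 : ((19/20*LAB))^2 * ((19/20*LBC))^2 ≤
        ((u1-v1)^2+(u2-v2)^2) * ((v1-w1)^2+(v2-w2)^2) :=
      mul_le_mul hm1sq hm2sq (by positivity) (by positivity)
    have h123 : ((19/20*LAB))^2 * ((19/20*LBC))^2 * ((19/20*LAC))^2 ≤
        ((u1-v1)^2+(u2-v2)^2) * ((v1-w1)^2+(v2-w2)^2) * ((u1-w1)^2+(u2-w2)^2) :=
      mul_le_mul h12 hm3sq (by positivity) (by positivity)
    calc ((19/20*LAB) * (19/20*LBC) * (19/20*LAC))^2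
        = ((19/20*LAB))^2 * ((19/20*LBC))^2 * ((19/20*LAC))^2 := by ring
      _ ≤ _ := h123
  have h2bd : (19/20*LAB) * (19/20*LBC) * (19/20*LAC) ≤ 2*b*|detv| := by
    refine le_of_sq_le_sq' hprod (by positivity) ?_
    exact mul_nonneg (by linarith) (abs_nonneg _)
  have hdetv : (19/20)^3*(2*c)*(LAB*LAC)/4 ≤ |detv| := by
    have hLL : (0:ℝ) ≤ LAB*LAC := by positivity
    have hstep : (19/20)^3*(2*c)*(LAB*LAC) ≤ (19/20*LAB) * (19/20*LBC) * (19/20*LAC) := by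
      linarith [mul_nonneg (by linarith : (0:ℝ) ≤ LBC - 2*c) hLL]
    have h2b4 : 2*b*|detv| ≤ 4*|detv| := by
      linarith [mul_nonneg (by linarith : (0:ℝ) ≤ 4 - 2*b) (abs_nonneg detv)]
    linarith
  -- Step 5 : perturbation from projected determinant to the true one
  set dete := (B1-A1)*(C2-A2) - (B2-A2)*(C1-A1) with hdetedef
  have hdiff1 : N2 ((B1-A1)-(v1-u1)) ((B2-A2)-(v2-u2)) ≤ 2*a := by
    have h := N2_sub_le' (B1-x1) (B2-x2) (A1-x1) (A2-x2) v1 v2 u1 u2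
    have e1 : N2 (((B1-x1))-((A1-x1)) - (v1-u1)) (((B2-x2))-((A2-x2)) - (v2-u2))
        = N2 ((B1-A1)-(v1-u1)) ((B2-A2)-(v2-u2)) := by congr 1 <;> ring
    rw [e1, hNvB, hNuA] at h
    linarith
  have hdiff2 : N2 ((C1-A1)-(w1-u1)) ((C2-A2)-(w2-u2)) ≤ 2*a := by
    have h := N2_sub_le' (C1-x1) (C2-x2) (A1-x1) (A2-x2) w1 w2 u1 u2
    have e1 : N2 (((C1-x1))-((A1-x1)) - (w1-u1)) (((C2-x2))-((A2-x2)) - (w2-u2))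
        = N2 ((C1-A1)-(w1-u1)) ((C2-A2)-(w2-u2)) := by congr 1 <;> ring
    rw [e1, hNwC, hNuA] at h
    linarith
  have hvu_up : N2 (v1-u1) (v2-u2) ≤ LAB + 2*a := by
    have h := chord_upper (B1-x1) (B2-x2) (A1-x1) (A2-x2) v1 v2 u1 u2
    have e : N2 ((B1-x1)-(A1-x1)) ((B2-x2)-(A2-x2)) = LAB := by
      rw [← hABsymm]; congr 1 <;> ring
    rw [e, hNvB, hNuA] at h
    linarith
  have hCA : N2 (C1-A1) (C2-A2) = LAC := hCAsymm
  have hpert : |dete - detv| ≤ 2*a*LAC + (LAB+2*a)*(2*a) := by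
    have e : dete - detv = (((B1-A1)-(v1-u1))*(C2-A2) - ((B2-A2)-(v2-u2))*(C1-A1))
        + ((v1-u1)*((C2-A2)-(w2-u2)) - (v2-u2)*((C1-A1)-(w1-u1))) := by
      rw [hdetedef, hdetvdef]; ring
    rw [e]
    refine le_trans (abs_add_le _ _) ?_
    have t1 : |((B1-A1)-(v1-u1))*(C2-A2) - ((B2-A2)-(v2-u2))*(C1-A1)|
        ≤ 2*a*LAC := by
      refine le_trans (N2_det_le _ _ _ _) ?_
      rw [hCA]
      exact mul_le_mul_of_nonneg_right hdiff1 (le_of_lt hLAC0)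
    have t2 : |(v1-u1)*((C2-A2)-(w2-u2)) - (v2-u2)*((C1-A1)-(w1-u1))|
        ≤ (LAB+2*a)*(2*a) := by
      refine le_trans (N2_det_le _ _ _ _) ?_
      exact mul_le_mul hvu_up hdiff2 (N2_nonneg _ _) (by linarith)
    linarith
  -- Step 6 : lower bound for the true determinant
  have hdet_low : 3/10*c*(LAB*LAC) ≤ |dete| := by
    have habs : |detv| - |dete| ≤ |dete - detv| := by
      have h := abs_sub_abs_le_abs_sub detv dete
      rw [abs_sub_comm detv dete] at h
      exact h
    have k1 : 2*a*LAC ≤ 1/20*(c*(LAB*LAC)) := by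
      have h1 : 2*a ≤ c*LAB/20 := by
        linarith [mul_nonneg hc0.le (by linarith : (0:ℝ) ≤ LAB - 2*c)]
      have h2 := mul_le_mul_of_nonneg_right h1 (le_of_lt hLAC0)
      linarith
    have k2 : 2*a*LAB ≤ 1/20*(c*(LAB*LAC)) := by
      have h1 : 2*a ≤ c*LAC/20 := by
        linarith [mul_nonneg hc0.le (by linarith : (0:ℝ) ≤ LAC - 2*c)]
      have h2 := mul_le_mul_of_nonneg_right h1 (le_of_lt hLAB0)
      linarith
    have hLL4 : 4*c^2 ≤ LAB*LAC := by
      linarith [mul_nonneg (by linarith : (0:ℝ) ≤ LAB - 2*c) (by linarith : (0:ℝ) ≤ LAC - 2*c),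
        mul_nonneg hc0.le (by linarith : (0:ℝ) ≤ LAB - 2*c),
        mul_nonneg hc0.le (by linarith : (0:ℝ) ≤ LAC - 2*c)]
    have k3 : 4*a^2 ≤ 1/100*(c*(LAB*LAC)) := by
      have ha2 : 4*a^2 ≤ c^4/100 := by
        linarith [mul_nonneg (by linarith : (0:ℝ) ≤ c^2/20 - a) (by linarith : (0:ℝ) ≤ c^2/20 + a)]
      have hc4 : c^4 ≤ c*(LAB*LAC) := by
        linarith [mul_le_mul_of_nonneg_left hLL4 hc0.le,
          mul_nonneg (mul_nonneg (mul_nonneg hc0.le hc0.le) hc0.le) (by linarith : (0:ℝ) ≤ 4 - c)]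
      linarith
    exact det_combine c LAB LAC detv dete a hdetv habs hpert k1 k2 k3
  -- Step 7 : Cramer-type bounds
  have hM : (0:ℝ) < 3/10*c*(LAB*LAC) := by positivity
  have hBA1 : |B1-A1| ≤ LAB := by
    have h := N2_comp1 (B1-A1) (B2-A2); rwa [hABsymm] at h
  have hBA2 : |B2-A2| ≤ LAB := by
    have h := N2_comp2 (B1-A1) (B2-A2); rwa [hABsymm] at h
  have hCA1 : |C1-A1| ≤ LAC := by
    have := N2_comp1 (C1-A1) (C2-A2)
    rwa [hCA] at this
  have hCA2 : |C2-A2| ≤ LAC := by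
    have := N2_comp2 (C1-A1) (C2-A2)
    rwa [hCA] at this
  have hkey : 8*c*(LAC+LAB) ≤ 81/10*(LAB*LAC) := by
    linarith [mul_le_mul_of_nonneg_right hAB (le_of_lt hLAC0),
      mul_le_mul_of_nonneg_right hAC (le_of_lt hLAB0),
      mul_nonneg (le_of_lt hLAB0) (le_of_lt hLAC0)]
  have h2 : 8*a*(LAC+LAB) ≤ 27*(a/c^2) * (3/10*c*(LAB*LAC)) := by
    have e : 27*(a/c^2) * (3/10*c*(LAB*LAC)) = (81/10*a*(LAB*LAC))/c := by
      field_simp; ring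
    rw [e, le_div_iff₀ hc0]
    linarith [mul_le_mul_of_nonneg_left hkey ha0.le]
  have main1 : |x1-y1| ≤ 27*(a/c^2) := by
    have cram : |x1-y1| * |dete| ≤ 8*a*(LAC + LAB) := by
      have e : (x1-y1)*dete = ((x1-y1)*(B1-A1) + (x2-y2)*(B2-A2))*(C2-A2)
          - ((x1-y1)*(C1-A1) + (x2-y2)*(C2-A2))*(B2-A2) := by
        rw [hdetedef]; ring
      have h1 : |x1-y1| * |dete| = |(x1-y1)*dete| := (abs_mul _ _).symm
      rw [h1, e, sub_eq_add_neg]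
      refine le_trans (abs_add_le _ _) ?_
      rw [abs_neg, abs_mul, abs_mul]
      have b1 : |(x1-y1)*(B1-A1) + (x2-y2)*(B2-A2)| * |C2-A2| ≤ 8*a*LAC :=
        mul_le_mul hip1 hCA2 (abs_nonneg _) (by positivity)
      have b2 : |(x1-y1)*(C1-A1) + (x2-y2)*(C2-A2)| * |B2-A2| ≤ 8*a*LAB :=
        mul_le_mul hip2 hBA2 (abs_nonneg _) (by positivity)
      linarith
    have h1 : |x1-y1| * (3/10*c*(LAB*LAC)) ≤ 8*a*(LAC+LAB) :=
      le_trans (mul_le_mul_of_nonneg_left hdet_low (abs_nonneg (x1-y1))) cram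
    exact le_of_mul_le_mul_right (le_trans h1 h2) hM
  have main2 : |x2-y2| ≤ 27*(a/c^2) := by
    have cram : |x2-y2| * |dete| ≤ 8*a*(LAC + LAB) := by
      have e : (x2-y2)*dete = ((x1-y1)*(C1-A1) + (x2-y2)*(C2-A2))*(B1-A1)
          - ((x1-y1)*(B1-A1) + (x2-y2)*(B2-A2))*(C1-A1) := by
        rw [hdetedef]; ring
      have h1 : |x2-y2| * |dete| = |(x2-y2)*dete| := (abs_mul _ _).symm
      rw [h1, e, sub_eq_add_neg]
      refine le_trans (abs_add_le _ _) ?_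
      rw [abs_neg, abs_mul, abs_mul]
      have b1 : |(x1-y1)*(C1-A1) + (x2-y2)*(C2-A2)| * |B1-A1| ≤ 8*a*LAB :=
        mul_le_mul hip2 hBA1 (abs_nonneg _) (by positivity)
      have b2 : |(x1-y1)*(B1-A1) + (x2-y2)*(B2-A2)| * |C1-A1| ≤ 8*a*LAC :=
        mul_le_mul hip1 hCA1 (abs_nonneg _) (by positivity)
      linarith
    have h1 : |x2-y2| * (3/10*c*(LAB*LAC)) ≤ 8*a*(LAC+LAB) :=
      le_trans (mul_le_mul_of_nonneg_left hdet_low (abs_nonneg (x2-y2))) cram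
    exact le_of_mul_le_mul_right (le_trans h1 h2) hM
  exact ⟨main1, main2⟩



lemma norm2_eq_N2 (z : EuclideanSpace ℝ (Fin 2)) : ‖z‖ = N2 (z 0) (z 1) := by
  rw [EuclideanSpace.norm_eq, Fin.sum_univ_two]
  unfold N2
  congr 1
  simp [Real.norm_eq_abs, sq_abs]

lemma proj2_norm (w : EuclideanSpace ℝ (Fin 3)) (P : EuclideanSpace ℝ (Fin 2)) :
    ‖proj2 w - P‖ = N2 (w 0 - P 0) (w 1 - P 1) := by
  rw [norm2_eq_N2]
  simp [proj2]

lemma normsub_eq_N2 (P Q : EuclideanSpace ℝ (Fin 2)) :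
    ‖P - Q‖ = N2 (P 0 - Q 0) (P 1 - Q 1) := by
  rw [norm2_eq_N2]
  congr 1 <;> simp

set_option maxHeartbeats 1000000 in
/-- **Lemma 2.5 (three-annuli lemma).** There is an absolute constant `C₀ > 0` such that:
if `A, B, C ∈ ℝ²` satisfy `min {‖A−B‖, ‖A−C‖, ‖B−C‖, 2} ≥ 2c` and `0 < a < c²/20`, then the
set `W` of pairs `(x, b) ∈ ℝ² × [1/2, 2]` (viewed as a subset of Euclidean `ℝ³`) with
`b − a ≤ ‖x − P‖ ≤ b + a` for every `P ∈ {A, B, C}` has diameter at most `C₀ · a / c²`. -/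
theorem diam_three_annuli_parameter_set :
    ∃ C₀ : ℝ, 0 < C₀ ∧
      ∀ (A B C : EuclideanSpace ℝ (Fin 2)) (c a : ℝ), 0 < c →
        2 * c ≤ min (min (‖A - B‖) (‖A - C‖)) (min (‖B - C‖) 2) →
        0 < a → a < c ^ 2 / 20 →
        Metric.diam {w : EuclideanSpace ℝ (Fin 3) |
            w 2 ∈ Set.Icc (1 / 2 : ℝ) 2 ∧
            (w 2 - a ≤ ‖proj2 w - A‖ ∧ ‖proj2 w - A‖ ≤ w 2 + a) ∧
            (w 2 - a ≤ ‖proj2 w - B‖ ∧ ‖proj2 w - B‖ ≤ w 2 + a) ∧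
            (w 2 - a ≤ ‖proj2 w - C‖ ∧ ‖proj2 w - C‖ ≤ w 2 + a)} ≤ C₀ * a / c ^ 2 := by
  refine ⟨120, by norm_num, ?_⟩
  intro A B C c a hc hmin ha0 ha
  have hc2 : (0:ℝ) < c^2 := by positivity
  have hc1 : c ≤ 1 := by
    have h2 := le_trans hmin (le_trans (min_le_right _ _) (min_le_right _ _))
    linarith
  have hAB : 2*c ≤ ‖A - B‖ := le_trans hmin (le_trans (min_le_left _ _) (min_le_left _ _))
  have hAC : 2*c ≤ ‖A - C‖ := le_trans hmin (le_trans (min_le_left _ _) (min_le_right _ _))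
  have hBC : 2*c ≤ ‖B - C‖ := le_trans hmin (le_trans (min_le_right _ _) (min_le_left _ _))
  rw [normsub_eq_N2] at hAB hAC hBC
  apply Metric.diam_le_of_forall_dist_le (by positivity)
  intro w hw w' hw'
  simp only [Set.mem_setOf_eq, Set.mem_Icc] at hw hw'
  obtain ⟨⟨hb1, hb2⟩, ⟨hA1, hA2⟩, ⟨hB1, hB2⟩, ⟨hC1, hC2⟩⟩ := hw
  obtain ⟨⟨hb1', hb2'⟩, ⟨hA1', hA2'⟩, ⟨hB1', hB2'⟩, ⟨hC1', hC2'⟩⟩ := hw'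
  rw [proj2_norm] at hA1 hA2 hB1 hB2 hC1 hC2 hA1' hA2' hB1' hB2' hC1' hC2'
  have hcore := core_bound a c (w 2) (w' 2) (w 0) (w 1) (w' 0) (w' 1)
    (A 0) (A 1) (B 0) (B 1) (C 0) (C 1) hc hc1 ha0 (le_of_lt ha)
    hb1 hb2 hb1' hb2' hAB hAC hBC
    hA1 hA2 hB1 hB2 hC1 hC2 hA1' hA2' hB1' hB2' hC1' hC2'
  obtain ⟨hm1, hm2⟩ := hcore
  -- bound on the radius difference
  have hrs : |N2 (w 0 - A 0) (w 1 - A 1) - N2 (w' 0 - A 0) (w' 1 - A 1)|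
      ≤ |w 0 - w' 0| + |w 1 - w' 1| := by
    have hN : N2 (w 0 - w' 0) (w 1 - w' 1) ≤ |w 0 - w' 0| + |w 1 - w' 1| :=
      N2_le_abs_add _ _
    have h1 : N2 (w 0 - A 0) (w 1 - A 1)
        ≤ N2 (w' 0 - A 0) (w' 1 - A 1) + N2 (w 0 - w' 0) (w 1 - w' 1) := by
      have e : N2 (w 0 - A 0) (w 1 - A 1)
          = N2 ((w' 0 - A 0) + (w 0 - w' 0)) ((w' 1 - A 1) + (w 1 - w' 1)) := by
        congr 1 <;> ring
      rw [e]; exact N2_add_le _ _ _ _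
    have h2 : N2 (w' 0 - A 0) (w' 1 - A 1)
        ≤ N2 (w 0 - A 0) (w 1 - A 1) + N2 (w 0 - w' 0) (w 1 - w' 1) := by
      have e : N2 (w' 0 - A 0) (w' 1 - A 1)
          = N2 ((w 0 - A 0) + (w' 0 - w 0)) ((w 1 - A 1) + (w' 1 - w 1)) := by
        congr 1 <;> ring
      rw [e]
      refine le_trans (N2_add_le _ _ _ _) ?_
      have e2 : N2 (w' 0 - w 0) (w' 1 - w 1) = N2 (w 0 - w' 0) (w 1 - w' 1) :=
        N2_sub_comm _ _ _ _
      rw [e2]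
    rw [abs_le]; constructor <;> [linarith; linarith]
  have hbdiff : |w 2 - w' 2| ≤ 2*a + (|w 0 - w' 0| + |w 1 - w' 1|) := by
    rw [abs_le] at hrs ⊢
    constructor <;> linarith
  -- distance bound
  have hdist : dist w w' ≤ |w 0 - w' 0| + |w 1 - w' 1| + |w 2 - w' 2| := by
    have hT : (0:ℝ) ≤ |w 0 - w' 0| + |w 1 - w' 1| + |w 2 - w' 2| := by positivity
    rw [EuclideanSpace.dist_eq, Fin.sum_univ_three]
    refine le_trans (Real.sqrt_le_sqrt ?_) (le_of_eq (Real.sqrt_sq hT))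
    simp only [Real.dist_eq]
    nlinarith [sq_abs (w 0 - w' 0), sq_abs (w 1 - w' 1), sq_abs (w 2 - w' 2),
      mul_nonneg (abs_nonneg (w 0 - w' 0)) (abs_nonneg (w 1 - w' 1)),
      mul_nonneg (abs_nonneg (w 0 - w' 0)) (abs_nonneg (w 2 - w' 2)),
      mul_nonneg (abs_nonneg (w 1 - w' 1)) (abs_nonneg (w 2 - w' 2))]
  have haa : a ≤ a/c^2 := by
    rw [le_div_iff₀ hc2]
    nlinarith [mul_le_mul_of_nonneg_left (show c^2 ≤ 1 by nlinarith) ha0.le]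
  have e120 : (120:ℝ) * a / c^2 = 120*(a/c^2) := by ring
  rw [e120]
  linarith
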